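/- Let λ ⊢ n have Frobenius coordinates (a₁,...,a_m | b₁,...,b_m), let k ≥ 1, and let λ∖λ₁ denote the partition of n − λ₁ obtained by deleting the first row of λ, with Frobenius coordinates (a′₁,...,a′_{m′} | b′₁,...,b′_{m′}). Then as an identity of rational functions in z, F_k^{a,b}(z) · (z − a₁ + k/2)/(z − a₁ − k/2) = F_k^{a′,b′}(z + 1). -/

import Mathlib

/-- The `i`-th part of a partition (0-indexed, parts in decreasing order, `0` beyond the
number of parts). -/
def partNth (n : ℕ) (l : Nat.Partition n) (i : ℕ) : ℕ :=
  ((l.parts.sort (· ≤ ·)).reverse.getD i 0)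

/-- Diagonal length `m` of the partition. -/
def diagLen (n : ℕ) (l : Nat.Partition n) : ℕ :=
  ((Finset.range n).filter (fun i => i < partNth n l i)).card

/-- `λ'_{i+1} = #{j : λ_j ≥ i+1}`, the parts of the conjugate partition. -/
def conjNth (n : ℕ) (l : Nat.Partition n) (i : ℕ) : ℕ :=
  ((Finset.range n).filter (fun j => i < partNth n l j)).card

/-- Frobenius coordinate `a_i = λ_i − i + 1/2` (0-indexed `i`), as a rational number. -/
def faQ (n : ℕ) (l : Nat.Partition n) (i : ℕ) : ℚ :=
  (partNth n l i : ℚ) - i - 1/2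

/-- Frobenius coordinate `b_i = λ′_i − i + 1/2` (0-indexed `i`), as a rational number. -/
def fbQ (n : ℕ) (l : Nat.Partition n) (i : ℕ) : ℚ :=
  (conjNth n l i : ℚ) - i - 1/2

/-- The rational function
`F_k^{a,b}(z) = (z + (k−1)/2)^{k↓} ∏_j (z−a_j−k/2)/(z−a_j+k/2) ∏_j (z+b_j+k/2)/(z+b_j−k/2)`. -/
noncomputable def Fab (n : ℕ) (l : Nat.Partition n) (k : ℕ) : RatFunc ℚ :=
  (∏ i ∈ Finset.range k, (RatFunc.X + RatFunc.C (((k : ℚ) - 1)/2) - RatFunc.C (i : ℚ))) *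
    (∏ j ∈ Finset.range (diagLen n l),
      (RatFunc.X - RatFunc.C (faQ n l j) - RatFunc.C ((k : ℚ)/2)) /
        (RatFunc.X - RatFunc.C (faQ n l j) + RatFunc.C ((k : ℚ)/2))) *
    (∏ j ∈ Finset.range (diagLen n l),
      (RatFunc.X + RatFunc.C (fbQ n l j) + RatFunc.C ((k : ℚ)/2)) /
        (RatFunc.X + RatFunc.C (fbQ n l j) - RatFunc.C ((k : ℚ)/2)))

/-- Substitution `z ↦ z + 1` in a rational function over `ℚ`. -/
noncomputable def shiftOne (p : RatFunc ℚ) : RatFunc ℚ :=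
  RatFunc.eval (RatFunc.C : ℚ →+* RatFunc ℚ) (RatFunc.X + 1) p

lemma frob_downclosed_eq_range (s : Finset ℕ) (h : ∀ j ∈ s, ∀ i ≤ j, i ∈ s) :
    s = Finset.range s.card := by
  rcases s.eq_empty_or_nonempty with rfl | hs
  · simp
  · have hmax := s.max'_mem hs
    have h1 : s = Finset.range (s.max' hs + 1) := by
      apply Finset.Subset.antisymm
      · intro x hx; exact Finset.mem_range.mpr (Nat.lt_succ_of_le (s.le_max' x hx))
      · intro x hx; exact h _ hmax x (Nat.lt_succ_iff.mp (Finset.mem_range.mp hx))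
    rw [h1, Finset.card_range]

lemma frob_partNth_anti (n : ℕ) (l : Nat.Partition n) {i j : ℕ} (hij : i ≤ j) :
    partNth n l j ≤ partNth n l i := by
  unfold partNth
  set r := (l.parts.sort (· ≤ ·)).reverse with hr
  have hp : List.Pairwise (fun a b => b ≤ a) r := by
    rw [hr, List.pairwise_reverse]
    exact Multiset.pairwise_sort _ (· ≤ ·)
  rcases Nat.lt_or_ge j r.length with hj | hj
  · have hi : i < r.length := lt_of_le_of_lt hij hj
    rw [List.getD_eq_getElem _ _ hj, List.getD_eq_getElem _ _ hi]
    rcases Nat.eq_or_lt_of_le hij with rfl | hlt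
    · exact le_refl _
    · exact List.pairwise_iff_getElem.mp hp i j hi hj hlt
  · rw [List.getD_eq_default _ _ hj]; exact Nat.zero_le _

lemma frob_card_le (n : ℕ) (l : Nat.Partition n) : Multiset.card l.parts ≤ n := by
  have h := Multiset.card_nsmul_le_sum (s := l.parts) (a := 1) (fun x hx => l.parts_pos hx)
  simpa [l.parts_sum] using h

lemma frob_partNth_eq_zero {n : ℕ} {l : Nat.Partition n} {i : ℕ} (h : n ≤ i) :
    partNth n l i = 0 := by
  unfold partNth
  apply List.getD_eq_default
  rw [List.length_reverse, Multiset.length_sort]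
  exact le_trans (frob_card_le n l) h

lemma frob_lt_diagLen (n : ℕ) (l : Nat.Partition n) (i : ℕ) :
    i < diagLen n l ↔ i < partNth n l i := by
  have key : (Finset.range n).filter (fun i => i < partNth n l i)
      = Finset.range (diagLen n l) :=
    frob_downclosed_eq_range _ (by
      intro j hj i hij
      rw [Finset.mem_filter, Finset.mem_range] at hj ⊢
      exact ⟨lt_of_le_of_lt hij hj.1,
        lt_of_le_of_lt hij (lt_of_lt_of_le hj.2 (frob_partNth_anti n l hij))⟩)
  constructor
  · intro h
    have : i ∈ Finset.range (diagLen n l) := Finset.mem_range.mpr h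
    rw [← key, Finset.mem_filter] at this
    exact this.2
  · intro h
    have hi : i < n := by
      by_contra h'
      rw [frob_partNth_eq_zero (le_of_not_gt h')] at h
      omega
    have : i ∈ (Finset.range n).filter (fun i => i < partNth n l i) :=
      Finset.mem_filter.mpr ⟨Finset.mem_range.mpr hi, h⟩
    rw [key, Finset.mem_range] at this
    exact this

lemma frob_lt_conjNth (n : ℕ) (l : Nat.Partition n) (i j : ℕ) :
    j < conjNth n l i ↔ i < partNth n l j := by
  have key : (Finset.range n).filter (fun j => i < partNth n l j)
      = Finset.range (conjNth n l i) :=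
    frob_downclosed_eq_range _ (by
      intro a ha b hba
      rw [Finset.mem_filter, Finset.mem_range] at ha ⊢
      exact ⟨lt_of_le_of_lt hba ha.1, lt_of_lt_of_le ha.2 (frob_partNth_anti n l hba)⟩)
  constructor
  · intro h
    have : j ∈ Finset.range (conjNth n l i) := Finset.mem_range.mpr h
    rw [← key, Finset.mem_filter] at this
    exact this.2
  · intro h
    have hj : j < n := by
      by_contra h'
      rw [frob_partNth_eq_zero (le_of_not_gt h')] at h
      omega
    have : j ∈ (Finset.range n).filter (fun j => i < partNth n l j) :=
      Finset.mem_filter.mpr ⟨Finset.mem_range.mpr hj, h⟩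
    rw [key, Finset.mem_range] at this
    exact this

lemma frob_partNth_erase (n : ℕ) (l : Nat.Partition n) (l' : Nat.Partition (n - partNth n l 0))
    (hl' : l'.parts = l.parts.erase (partNth n l 0)) (i : ℕ) :
    partNth (n - partNth n l 0) l' i = partNth n l (i + 1) := by
  rcases eq_or_ne (l.parts.sort (· ≤ ·)) [] with hnil | hnil
  · have hp : l.parts = 0 := by
      rw [← Multiset.sort_eq l.parts (· ≤ ·), hnil]; rfl
    have hp' : l'.parts = 0 := by rw [hl', hp]; simp
    have hs' : l'.parts.sort (· ≤ ·) = [] := by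
      apply (Multiset.coe_eq_zero _).mp
      rw [Multiset.sort_eq, hp']
    unfold partNth
    rw [hs', hnil]
    rfl
  · set s := l.parts.sort (· ≤ ·) with hs
    set L := s.getLast hnil with hL
    have hlast : s.dropLast ++ [L] = s := List.dropLast_append_getLast hnil
    have hparts : l.parts = ↑s := (Multiset.sort_eq _ _).symm
    have hrev : s.reverse = L :: s.dropLast.reverse := by
      conv_lhs => rw [← hlast]
      rw [List.reverse_append]
      rfl
    have h0 : partNth n l 0 = L := by
      unfold partNth
      rw [← hs, hrev]
      rfl
    have h1 : l'.parts = ↑s.dropLast := by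
      rw [hl', h0, hparts]
      conv_lhs => rw [← hlast]
      rw [← Multiset.coe_add]
      have : (↑[L] : Multiset ℕ) = {L} := rfl
      rw [this, add_comm, Multiset.singleton_add, Multiset.erase_cons_head]
    have h2 : l'.parts.sort (· ≤ ·) = s.dropLast := by
      refine (fun h a b => List.Perm.eq_of_pairwise' (r := @LE.le ℕ _) a b h) ?_ ?_ ?_
      · rw [← Multiset.coe_eq_coe, Multiset.sort_eq, h1]
      · exact Multiset.pairwise_sort _ _
      · exact List.Pairwise.sublist (List.dropLast_sublist s) (Multiset.pairwise_sort l.parts (· ≤ ·))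
    show (l'.parts.sort (· ≤ ·)).reverse.getD i 0 = (s.reverse).getD (i + 1) 0
    rw [h2, hrev]
    rfl

lemma frob_p0_pos {n : ℕ} (l : Nat.Partition n) (hn : 0 < n) : 0 < partNth n l 0 := by
  have hne : l.parts ≠ 0 := by
    intro h
    have := l.parts_sum
    rw [h] at this
    simp at this
    omega
  obtain ⟨a, ha⟩ := Multiset.exists_mem_of_ne_zero hne
  have hapos : 0 < a := l.parts_pos ha
  have hmem : a ∈ (l.parts.sort (· ≤ ·)).reverse := by
    rw [List.mem_reverse]
    rw [Multiset.mem_sort]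
    exact ha
  obtain ⟨i, hi, hgi⟩ := List.mem_iff_getElem.mp hmem
  have : partNth n l i = a := by
    unfold partNth
    rw [List.getD_eq_getElem _ _ hi, hgi]
  have := frob_partNth_anti n l (Nat.zero_le i)
  omega


noncomputable def shiftPoly : Polynomial ℚ →+* RatFunc ℚ :=
  (algebraMap (Polynomial ℚ) (RatFunc ℚ)).comp
    (Polynomial.eval₂RingHom Polynomial.C (Polynomial.X + 1))

lemma shiftPoly_apply (p : Polynomial ℚ) :
    shiftPoly p = algebraMap (Polynomial ℚ) (RatFunc ℚ)
      (Polynomial.eval₂ Polynomial.C (Polynomial.X + 1) p) := rfl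

lemma shiftPoly_ne_zero {p : Polynomial ℚ} (hp : p ≠ 0) : shiftPoly p ≠ 0 := by
  rw [shiftPoly_apply]
  apply RatFunc.algebraMap_ne_zero
  have : Polynomial.eval₂ Polynomial.C (Polynomial.X + 1) p
      = p.comp (Polynomial.X + Polynomial.C 1) := by
    rw [Polynomial.comp]; norm_num
  rw [this]
  exact Polynomial.comp_X_add_C_ne_zero_iff.mpr hp

lemma shiftPoly_cond : nonZeroDivisors (Polynomial ℚ) ≤ (nonZeroDivisors (RatFunc ℚ)).comap shiftPoly := by
  intro p hp
  simp only [Submonoid.mem_comap]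
  rw [mem_nonZeroDivisors_iff_ne_zero] at hp ⊢
  exact shiftPoly_ne_zero hp

noncomputable def shiftHom : RatFunc ℚ →+* RatFunc ℚ :=
  RatFunc.liftRingHom shiftPoly shiftPoly_cond

lemma shiftHom_algebraMap (p : Polynomial ℚ) :
    shiftHom (algebraMap (Polynomial ℚ) (RatFunc ℚ) p) = shiftPoly p := by
  have := RatFunc.liftRingHom_apply_div shiftPoly shiftPoly_cond p 1
  simp only [map_one, div_one] at this
  exact this

lemma shiftOne_eq (p : RatFunc ℚ) : shiftOne p = shiftHom p := by
  rw [shiftOne, RatFunc.eval]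
  conv_rhs => rw [← RatFunc.num_div_denom p]
  rw [map_div₀,
    shiftHom_algebraMap, shiftHom_algebraMap, shiftPoly_apply, shiftPoly_apply]
  have key : ∀ q : Polynomial ℚ,
      algebraMap (Polynomial ℚ) (RatFunc ℚ) (Polynomial.eval₂ Polynomial.C (Polynomial.X + 1) q)
        = Polynomial.eval₂ (RatFunc.C : ℚ →+* RatFunc ℚ) (RatFunc.X + 1) q := by
    intro q
    rw [Polynomial.hom_eval₂]
    have h1 : (algebraMap (Polynomial ℚ) (RatFunc ℚ)).comp Polynomial.C
        = (RatFunc.C : ℚ →+* RatFunc ℚ) := by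
      apply RingHom.ext; intro a; simp [RatFunc.algebraMap_C]
    have h2 : algebraMap (Polynomial ℚ) (RatFunc ℚ) (Polynomial.X + 1) = RatFunc.X + 1 := by
      rw [map_add, RatFunc.algebraMap_X, map_one]
    rw [h1, h2]
  rw [key, key]

@[simp] lemma shiftHom_X : shiftHom RatFunc.X = RatFunc.X + 1 := by
  rw [← RatFunc.algebraMap_X (K := ℚ), shiftHom_algebraMap, shiftPoly_apply]
  simp [Polynomial.eval₂_X, map_add, RatFunc.algebraMap_X]

@[simp] lemma shiftHom_C (c : ℚ) : shiftHom (RatFunc.C c) = RatFunc.C c := by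
  rw [← RatFunc.algebraMap_C (K := ℚ), shiftHom_algebraMap, shiftPoly_apply]
  simp [RatFunc.algebraMap_C]

lemma frob_XC_ne (c : ℚ) : RatFunc.X + RatFunc.C c ≠ 0 := by
  rw [← RatFunc.algebraMap_X (K := ℚ), ← RatFunc.algebraMap_C (K := ℚ), ← map_add]
  exact RatFunc.algebraMap_ne_zero (Polynomial.X_add_C_ne_zero c)

lemma frob_ne1 (a b : ℚ) : RatFunc.X - RatFunc.C a - RatFunc.C b ≠ 0 := by
  have h : RatFunc.X - RatFunc.C a - RatFunc.C b = RatFunc.X + RatFunc.C (-a - b) := by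
    rw [map_sub, map_neg]; ring
  rw [h]; exact frob_XC_ne _

lemma frob_ne2 (a b : ℚ) : RatFunc.X - RatFunc.C a + RatFunc.C b ≠ 0 := by
  have h : RatFunc.X - RatFunc.C a + RatFunc.C b = RatFunc.X + RatFunc.C (b - a) := by
    rw [map_sub]; ring
  rw [h]; exact frob_XC_ne _

lemma frob_ne3 (a b : ℚ) : RatFunc.X + RatFunc.C a + RatFunc.C b ≠ 0 := by
  have h : RatFunc.X + RatFunc.C a + RatFunc.C b = RatFunc.X + RatFunc.C (a + b) := by
    rw [map_add]; ring
  rw [h]; exact frob_XC_ne _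

lemma frob_ne4 (a b : ℚ) : RatFunc.X + RatFunc.C a - RatFunc.C b ≠ 0 := by
  have h : RatFunc.X + RatFunc.C a - RatFunc.C b = RatFunc.X + RatFunc.C (a - b) := by
    rw [map_sub]; ring
  rw [h]; exact frob_XC_ne _

lemma frob_neX_sub (a : ℚ) : RatFunc.X - RatFunc.C a ≠ 0 := by
  have h : RatFunc.X - RatFunc.C a = RatFunc.X + RatFunc.C (-a) := by rw [map_neg]; ring
  rw [h]; exact frob_XC_ne _

lemma frob_field0 {F : Type*} [Field F] (Q xa xb : F) (hxa : xa ≠ 0) :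
    Q * xa * (xb / xa) = Q * xb := by
  field_simp

lemma frob_field1 {F : Type*} [Field F] (Q T B a b xa xb : F)
    (ha : a ≠ 0) (hb : b ≠ 0) (hxb : xb ≠ 0) :
    Q * xa * (T * (a / b)) * B * (b / a) = Q * xb * (T * (xa / xb)) * B := by
  field_simp

lemma frob_field2 {F : Type*} [Field F] (Q T U a b xa xb : F)
    (ha : a ≠ 0) (hb : b ≠ 0) (hxa : xa ≠ 0) :
    Q * xa * (T * (a / b)) * (U * (xb / xa)) * (b / a) = Q * xb * T * U := by
  field_simp

lemma shiftOne_Fab (n : ℕ) (l : Nat.Partition n) (k : ℕ) :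
    shiftOne (Fab n l k) =
      (∏ i ∈ Finset.range k,
        (RatFunc.X + 1 + RatFunc.C (((k : ℚ) - 1)/2) - RatFunc.C (i : ℚ))) *
      (∏ j ∈ Finset.range (diagLen n l),
        (RatFunc.X + 1 - RatFunc.C (faQ n l j) - RatFunc.C ((k : ℚ)/2)) /
          (RatFunc.X + 1 - RatFunc.C (faQ n l j) + RatFunc.C ((k : ℚ)/2))) *
      (∏ j ∈ Finset.range (diagLen n l),
        (RatFunc.X + 1 + RatFunc.C (fbQ n l j) + RatFunc.C ((k : ℚ)/2)) /
          (RatFunc.X + 1 + RatFunc.C (fbQ n l j) - RatFunc.C ((k : ℚ)/2))) := by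
  rw [shiftOne_eq, Fab, map_mul, map_mul, map_prod, map_prod, map_prod]
  simp only [map_div₀, map_sub, map_add, shiftHom_X, shiftHom_C]

theorem frob_aux (n : ℕ) (l : Nat.Partition n) (k : ℕ) (hk : 1 ≤ k)
    (n' : ℕ) (l' : Nat.Partition n')
    (hpart : ∀ i, partNth n' l' i = partNth n l (i + 1)) :
    Fab n l k *
        ((RatFunc.X - RatFunc.C (faQ n l 0) + RatFunc.C ((k : ℚ)/2)) /
          (RatFunc.X - RatFunc.C (faQ n l 0) - RatFunc.C ((k : ℚ)/2))) =
      shiftOne (Fab n' l' k) := by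
  set m := diagLen n l with hmdef
  set m' := diagLen n' l' with hm'def
  have hfa' : ∀ j, faQ n' l' j = faQ n l (j + 1) + 1 := by
    intro j; unfold faQ; rw [hpart]; push_cast; ring
  have hm'iff : ∀ i, i < m' ↔ i < partNth n l (i + 1) := by
    intro i; rw [hm'def, frob_lt_diagLen, hpart]
  have hmiff : ∀ i, i < m ↔ i < partNth n l i := fun i => by
    rw [hmdef]; exact frob_lt_diagLen n l i
  have hconj : ∀ j, j < m' → conjNth n l j = conjNth n' l' j + 1 := by
    intro j hj
    have hiff : ∀ i, i < conjNth n' l' j ↔ i + 1 < conjNth n l j := by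
      intro i
      rw [frob_lt_conjNth, hpart, ← frob_lt_conjNth]
    have h0 : 0 < conjNth n l j := by
      rw [frob_lt_conjNth]
      have h1 : j < partNth n l (j + 1) := (hm'iff j).mp hj
      exact lt_of_lt_of_le h1 (frob_partNth_anti n l (Nat.zero_le _))
    have t1 := hiff (conjNth n' l' j)
    have t2 := hiff (conjNth n' l' j - 1)
    omega
  have hfb' : ∀ j, j < m' → fbQ n' l' j = fbQ n l j - 1 := by
    intro j hj
    unfold fbQ
    rw [hconj j hj]
    push_cast; ring
  rw [shiftOne_Fab, Fab, ← hmdef, ← hm'def]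
  have hArw : (∏ j ∈ Finset.range m',
      (RatFunc.X + 1 - RatFunc.C (faQ n' l' j) - RatFunc.C ((k : ℚ)/2)) /
        (RatFunc.X + 1 - RatFunc.C (faQ n' l' j) + RatFunc.C ((k : ℚ)/2)))
      = ∏ j ∈ Finset.range m',
      (RatFunc.X - RatFunc.C (faQ n l (j+1)) - RatFunc.C ((k : ℚ)/2)) /
        (RatFunc.X - RatFunc.C (faQ n l (j+1)) + RatFunc.C ((k : ℚ)/2)) := by
    apply Finset.prod_congr rfl
    intro j _
    have h : RatFunc.X + 1 - RatFunc.C (faQ n' l' j) = RatFunc.X - RatFunc.C (faQ n l (j+1)) := by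
      rw [hfa' j, map_add, map_one]; ring
    rw [h]
  have hBrw : (∏ j ∈ Finset.range m',
      (RatFunc.X + 1 + RatFunc.C (fbQ n' l' j) + RatFunc.C ((k : ℚ)/2)) /
        (RatFunc.X + 1 + RatFunc.C (fbQ n' l' j) - RatFunc.C ((k : ℚ)/2)))
      = ∏ j ∈ Finset.range m',
      (RatFunc.X + RatFunc.C (fbQ n l j) + RatFunc.C ((k : ℚ)/2)) /
        (RatFunc.X + RatFunc.C (fbQ n l j) - RatFunc.C ((k : ℚ)/2)) := by
    apply Finset.prod_congr rfl
    intro j hj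
    have h : RatFunc.X + 1 + RatFunc.C (fbQ n' l' j) = RatFunc.X + RatFunc.C (fbQ n l j) := by
      rw [hfb' j (Finset.mem_range.mp hj), map_sub, map_one]; ring
    rw [h]
  rw [hArw, hBrw]
  have hP : (∏ i ∈ Finset.range k,
        (RatFunc.X + RatFunc.C (((k : ℚ) - 1)/2) - RatFunc.C (i : ℚ)))
      = (∏ i ∈ Finset.range (k-1),
        (RatFunc.X + RatFunc.C (((k : ℚ) - 1)/2) - RatFunc.C (i : ℚ)))
        * (RatFunc.X - RatFunc.C (((k : ℚ) - 1)/2)) := by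
    conv_lhs => rw [show k = (k-1)+1 by omega, Finset.prod_range_succ]
    simp only [show k - 1 + 1 = k from by omega]
    congr 1
    have hc : ((k-1 : ℕ) : ℚ) = (k : ℚ) - 1 := by
      rw [Nat.cast_sub hk, Nat.cast_one]
    rw [hc, show ((k:ℚ) - 1) = ((k:ℚ)-1)/2 + ((k:ℚ)-1)/2 by ring, map_add]
    ring
  have hPg : (∏ i ∈ Finset.range k,
        (RatFunc.X + 1 + RatFunc.C (((k : ℚ) - 1)/2) - RatFunc.C (i : ℚ)))
      = (∏ i ∈ Finset.range (k-1),
        (RatFunc.X + RatFunc.C (((k : ℚ) - 1)/2) - RatFunc.C (i : ℚ)))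
        * (RatFunc.X + RatFunc.C (((k : ℚ) + 1)/2)) := by
    conv_lhs => rw [show k = (k-1)+1 by omega, Finset.prod_range_succ']
    simp only [show k - 1 + 1 = k from by omega]
    congr 1
    · apply Finset.prod_congr rfl
      intro i _
      have hc : ((i+1 : ℕ) : ℚ) = (i : ℚ) + 1 := by push_cast; ring
      rw [hc, map_add, map_one]
      ring
    · rw [Nat.cast_zero, map_zero,
        show ((k:ℚ)+1)/2 = ((k:ℚ)-1)/2 + 1 by ring, map_add, map_one]
      ring
  rw [hP, hPg]
  have e1 : RatFunc.X - RatFunc.C (-(1/2) : ℚ) + RatFunc.C ((k : ℚ)/2)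
      = RatFunc.X + RatFunc.C (((k : ℚ) + 1)/2) := by
    rw [show (((k:ℚ)+1)/2) = (k:ℚ)/2 - (-(1/2)) by ring, map_sub]; ring
  have e2 : RatFunc.X - RatFunc.C (-(1/2) : ℚ) - RatFunc.C ((k : ℚ)/2)
      = RatFunc.X - RatFunc.C (((k : ℚ) - 1)/2) := by
    rw [show (((k:ℚ)-1)/2) = (k:ℚ)/2 + (-(1/2)) by ring, map_add]; ring
  have e3 : RatFunc.X + RatFunc.C ((1/2 : ℚ)) + RatFunc.C ((k : ℚ)/2)
      = RatFunc.X + RatFunc.C (((k : ℚ) + 1)/2) := by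
    rw [show (((k:ℚ)+1)/2) = (k:ℚ)/2 + (1/2) by ring, map_add]; ring
  have e4 : RatFunc.X + RatFunc.C ((1/2 : ℚ)) - RatFunc.C ((k : ℚ)/2)
      = RatFunc.X - RatFunc.C (((k : ℚ) - 1)/2) := by
    rw [show (((k:ℚ)-1)/2) = (k:ℚ)/2 - (1/2) by ring, map_sub]; ring
  have hA0n := frob_ne1 (faQ n l 0) ((k:ℚ)/2)
  have hA0d := frob_ne2 (faQ n l 0) ((k:ℚ)/2)
  have hXa := frob_neX_sub (((k:ℚ)-1)/2)
  have hXb := frob_XC_ne (((k:ℚ)+1)/2)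
  rcases Nat.eq_zero_or_pos n with hn | hn
  · -- n = 0 : empty partition
    have hp0 : partNth n l 0 = 0 := frob_partNth_eq_zero (by omega)
    have hp1 : partNth n l (0+1) = 0 := frob_partNth_eq_zero (by omega)
    have hm0 : m = 0 := by have := hmiff 0; omega
    have hm'0 : m' = 0 := by have := hm'iff 0; omega
    have hfa0 : faQ n l 0 = -(1/2) := by
      unfold faQ; rw [hp0]; push_cast; ring
    rw [hm0, hm'0, hfa0, e1, e2]
    simp only [Finset.prod_range_zero, mul_one, one_mul]
    exact frob_field0 _ _ _ hXa
  · have hm1 : 1 ≤ m := by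
      have h0 := (hmiff 0).mpr (frob_p0_pos l hn); omega
    have hml : partNth n l m ≤ m := by have := hmiff m; omega
    have hmsucc : m = (m-1)+1 := by omega
    have hsplitA : (∏ j ∈ Finset.range m,
          (RatFunc.X - RatFunc.C (faQ n l j) - RatFunc.C ((k : ℚ)/2)) /
            (RatFunc.X - RatFunc.C (faQ n l j) + RatFunc.C ((k : ℚ)/2)))
        = (∏ j ∈ Finset.range (m-1),
          (RatFunc.X - RatFunc.C (faQ n l (j+1)) - RatFunc.C ((k : ℚ)/2)) /
            (RatFunc.X - RatFunc.C (faQ n l (j+1)) + RatFunc.C ((k : ℚ)/2)))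
          * ((RatFunc.X - RatFunc.C (faQ n l 0) - RatFunc.C ((k : ℚ)/2)) /
            (RatFunc.X - RatFunc.C (faQ n l 0) + RatFunc.C ((k : ℚ)/2))) := by
      conv_lhs => rw [hmsucc]
      rw [Finset.prod_range_succ']
    rcases eq_or_lt_of_le hml with heq | hlt
    · -- partNth n l m = m : diagonal length stays
      have hm'm : m' = m := by
        have hub := hm'iff m
        have hub2 : partNth n l (m+1) ≤ partNth n l m := frob_partNth_anti n l (by omega)
        have hlb := hm'iff (m-1)
        rw [show m - 1 + 1 = m from by omega] at hlb
        omega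
      have hfam : faQ n l m = -(1/2) := by
        unfold faQ; rw [heq]; ring
      have hsplitA' : (∏ j ∈ Finset.range m,
            (RatFunc.X - RatFunc.C (faQ n l (j+1)) - RatFunc.C ((k : ℚ)/2)) /
              (RatFunc.X - RatFunc.C (faQ n l (j+1)) + RatFunc.C ((k : ℚ)/2)))
          = (∏ j ∈ Finset.range (m-1),
            (RatFunc.X - RatFunc.C (faQ n l (j+1)) - RatFunc.C ((k : ℚ)/2)) /
              (RatFunc.X - RatFunc.C (faQ n l (j+1)) + RatFunc.C ((k : ℚ)/2)))
            * ((RatFunc.X - RatFunc.C (faQ n l m) - RatFunc.C ((k : ℚ)/2)) /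
              (RatFunc.X - RatFunc.C (faQ n l m) + RatFunc.C ((k : ℚ)/2))) := by
        conv_lhs => rw [hmsucc]
        rw [Finset.prod_range_succ, show m - 1 + 1 = m from by omega]
      rw [hm'm, hsplitA, hsplitA', hfam, e1, e2]
      exact frob_field1 _ _ _ _ _ _ _ hA0n hA0d hXb
    · -- partNth n l m < m : diagonal length drops by one
      have hm'm : m' = m - 1 := by
        have hub := hm'iff (m-1)
        rw [show m - 1 + 1 = m from by omega] at hub
        have hge : m - 1 ≤ m' := by
          rcases Nat.eq_zero_or_pos (m-1) with h0 | h0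
          · omega
          · have h2 : m - 2 + 1 < m := by omega
            have h3 := (hmiff (m-2+1)).mp h2
            have h4 := hm'iff (m-2)
            omega
        omega
      have hconjm : conjNth n l (m-1) = m := by
        have h1 := frob_lt_conjNth n l (m-1) (m-1)
        have h2 := frob_lt_conjNth n l (m-1) m
        have h3 := (hmiff (m-1)).mp (by omega)
        omega
      have hfbm : fbQ n l (m-1) = 1/2 := by
        unfold fbQ
        rw [hconjm, Nat.cast_sub hm1, Nat.cast_one]
        ring
      have hsplitB : (∏ j ∈ Finset.range m,
            (RatFunc.X + RatFunc.C (fbQ n l j) + RatFunc.C ((k : ℚ)/2)) /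
              (RatFunc.X + RatFunc.C (fbQ n l j) - RatFunc.C ((k : ℚ)/2)))
          = (∏ j ∈ Finset.range (m-1),
            (RatFunc.X + RatFunc.C (fbQ n l j) + RatFunc.C ((k : ℚ)/2)) /
              (RatFunc.X + RatFunc.C (fbQ n l j) - RatFunc.C ((k : ℚ)/2)))
            * ((RatFunc.X + RatFunc.C (fbQ n l (m-1)) + RatFunc.C ((k : ℚ)/2)) /
              (RatFunc.X + RatFunc.C (fbQ n l (m-1)) - RatFunc.C ((k : ℚ)/2))) := by
        conv_lhs => rw [hmsucc]
        rw [Finset.prod_range_succ]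
      rw [hm'm, hsplitA, hsplitB, hfbm, e3, e4]
      exact frob_field2 _ _ _ _ _ _ _ hA0n hA0d hXa

/-- **Lemma (row-deletion identity).** Let `λ ⊢ n` with Frobenius coordinates `(a|b)`,
`k ≥ 1`, and let `λ∖λ₁ ⊢ n − λ₁` be the partition obtained by deleting the first row of `λ`
(its parts are the parts of `λ` with one occurrence of `λ₁` removed), with Frobenius
coordinates `(a'|b')`. Then, as an identity of rational functions in `z`,
`F_k^{a,b}(z) · (z − a₁ + k/2)/(z − a₁ − k/2) = F_k^{a',b'}(z + 1)`. -/
theorem Fab_delete_first_row (n : ℕ) (l : Nat.Partition n) (k : ℕ) (hk : 1 ≤ k)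
    (l' : Nat.Partition (n - partNth n l 0))
    (hl' : l'.parts = l.parts.erase (partNth n l 0)) :
    Fab n l k *
        ((RatFunc.X - RatFunc.C (faQ n l 0) + RatFunc.C ((k : ℚ)/2)) /
          (RatFunc.X - RatFunc.C (faQ n l 0) - RatFunc.C ((k : ℚ)/2))) =
      shiftOne (Fab (n - partNth n l 0) l' k) :=
  frob_aux n l k hk _ l' (frob_partNth_erase n l l' hl')
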